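/- Let T be a consistent c.e. extension of PA whose height exceeds cx(A) for a given modal formula A, and suppose that for every Σ1 sentence σ there exists an arithmetical interpretation f such that PA ⊢ σ → f_T(□A) and PA + Con_T^{cx(A)+1} ⊢ f_T(□A) → σ. Then A is nontrifling, i.e., GL_ω does not prove □□A → □A. -/

import Mathlib

/-- An abstract setting for the arithmetic of provability: a type of sentences
of the language of arithmetic with falsity and implication, a provability
predicate `pr` (the sentence `Pr_T(⌜·⌝)`), provability in PA and in the fixed
consistent c.e. extension `T` of PA, the class of Σ₁ sentences, and truth in
the standard model ℕ. -/
structure PASetup where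
  Sent : Type
  fal : Sent
  imp : Sent → Sent → Sent
  pr : Sent → Sent
  PAPrv : Sent → Prop
  TPrv : Sent → Prop
  Sigma1 : Sent → Prop
  TrueN : Sent → Prop

namespace PASetup

def neg (S : PASetup) (A : S.Sent) : S.Sent := S.imp A S.fal
def conj (S : PASetup) (A B : S.Sent) : S.Sent := S.neg (S.imp A (S.neg B))
def disj (S : PASetup) (A B : S.Sent) : S.Sent := S.imp (S.neg A) B
def biimp (S : PASetup) (A B : S.Sent) : S.Sent := S.conj (S.imp A B) (S.imp B A)
/-- `Con_T := ¬Pr_T(⌜0=1⌝)`. -/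
def con (S : PASetup) : S.Sent := S.neg (S.pr S.fal)
/-- Provability in `PA + Con_T` (via the deduction theorem). -/
def PAConPrv (S : PASetup) (A : S.Sent) : Prop := S.PAPrv (S.imp S.con A)

/-- Iterated consistency statements: `Con_T^0 := (0=0)`,
`Con_T^{n+1} := ¬Pr_T(⌜¬Con_T^n⌝)`. -/
def conIter (S : PASetup) : ℕ → S.Sent
  | 0 => S.neg S.fal
  | n+1 => S.neg (S.pr (S.neg (conIter S n)))

/-- `A` is an instance of a propositional tautology. -/
def TautInst (S : PASetup) (A : S.Sent) : Prop :=
  ∀ v : S.Sent → Bool, (∀ B C, v (S.imp B C) = (!(v B) || v C)) →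
    v S.fal = false → v A = true

/-- The standard facts assumed about `PA`, `T`, and the natural Σ₁ provability
predicate `Pr_T` (closure under propositional logic, consistency of `T`, the
Hilbert–Bernays–Löb derivability conditions, provable Σ₁-completeness, Löb's
theorem, soundness of PA, and the semantics of truth in ℕ). -/
structure Facts (S : PASetup) : Prop where
  pa_taut : ∀ A, S.TautInst A → S.PAPrv A
  pa_mp : ∀ A B, S.PAPrv (S.imp A B) → S.PAPrv A → S.PAPrv B
  pa_t : ∀ A, S.PAPrv A → S.TPrv A
  t_taut : ∀ A, S.TautInst A → S.TPrv A
  t_mp : ∀ A B, S.TPrv (S.imp A B) → S.TPrv A → S.TPrv B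
  t_con : ¬ S.TPrv S.fal
  d1 : ∀ A, S.TPrv A → S.PAPrv (S.pr A)
  d2 : ∀ A B, S.PAPrv (S.imp (S.pr (S.imp A B)) (S.imp (S.pr A) (S.pr B)))
  d3 : ∀ A, S.Sigma1 A → S.PAPrv (S.imp A (S.pr A))
  sigma1_pr : ∀ A, S.Sigma1 (S.pr A)
  sigma1_fal : S.Sigma1 S.fal
  sigma1_top : S.Sigma1 (S.neg S.fal)
  prv_of_incon : ∀ A, S.PAPrv (S.imp (S.neg S.con) (S.pr A))
  lob : ∀ A, S.TPrv (S.imp (S.pr A) A) → S.TPrv A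
  pa_sound : ∀ A, S.PAPrv A → S.TrueN A
  true_imp : ∀ A B, S.TrueN (S.imp A B) ↔ (S.TrueN A → S.TrueN B)
  true_fal : ¬ S.TrueN S.fal
  true_pr : ∀ A, S.TrueN (S.pr A) ↔ S.TPrv A

end PASetup

/-- Modal propositional formulas (variables are indexed by `ℕ`). -/
inductive MF : Type
  | var : ℕ → MF
  | fal : MF
  | imp : MF → MF → MF
  | box : MF → MF
deriving DecidableEq

namespace MF

def neg (A : MF) : MF := imp A fal
def top : MF := neg fal
def conj (A B : MF) : MF := neg (imp A (neg B))
def disj (A B : MF) : MF := imp (neg A) B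
def biimp (A B : MF) : MF := conj (imp A B) (imp B A)
def dia (A : MF) : MF := neg (box (neg A))
def boxn : ℕ → MF → MF
  | 0, A => A
  | n+1, A => box (boxn n A)
def dian (n : ℕ) (A : MF) : MF := neg (boxn n (neg A))

/-- Uniform substitution. -/
def subst (s : ℕ → MF) : MF → MF
  | var n => s n
  | fal => fal
  | imp A B => imp (subst s A) (subst s B)
  | box A => box (subst s A)

/-- The set of subformulas. -/
def subF : MF → Finset MF
  | var n => {var n}
  | fal => {fal}
  | imp A B => insert (imp A B) (subF A ∪ subF B)
  | box A => insert (box A) (subF A)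

def isBox : MF → Bool
  | box _ => true
  | _ => false

def unbox : MF → MF
  | box A => A
  | A => A

/-- `cx A` is the number of subformulas of `A` of the form `□C`. -/
def cx (A : MF) : ℕ := ((subF A).filter (fun B => isBox B = true)).card

/-- `Rf(A) = {□B → B : □B ∈ Sub(A)}`. -/
def RfSet (A : MF) : Finset MF :=
  ((subF A).filter (fun B => isBox B = true)).image (fun B => imp B (unbox B))

/-- Conjunction of a finite set of formulas. -/
noncomputable def conjFin (s : Finset MF) : MF := s.toList.foldr conj top

/-- `A` is an instance of a propositional tautology. -/
def TautInst (A : MF) : Prop :=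
  ∀ v : MF → Bool, (∀ B C, v (imp B C) = (!(v B) || v C)) → v fal = false → v A = true

end MF

/-- Provability in the Gödel–Löb logic GL. -/
inductive GLPrv : MF → Prop
  | taut {A} : MF.TautInst A → GLPrv A
  | k (A B : MF) : GLPrv (MF.imp (MF.box (MF.imp A B)) (MF.imp (MF.box A) (MF.box B)))
  | lob (A : MF) : GLPrv (MF.imp (MF.box (MF.imp (MF.box A) A)) (MF.box A))
  | mp {A B} : GLPrv (MF.imp A B) → GLPrv A → GLPrv B
  | nec {A} : GLPrv A → GLPrv (MF.box A)

/-- Provability in GL + Γ: axioms are GL-theorems and substitution instances of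
formulas in Γ; rules are modus ponens (and substitution, built into the axiom rule). -/
inductive ExtPrv (Ax : Set MF) : MF → Prop
  | gl {A} : GLPrv A → ExtPrv Ax A
  | ax {A} (s : ℕ → MF) : A ∈ Ax → ExtPrv Ax (A.subst s)
  | mp {A B} : ExtPrv Ax (MF.imp A B) → ExtPrv Ax A → ExtPrv Ax B

/-- GL_ω = GL + {◇ⁿ⊤ : n ∈ ω}. -/
def GLomegaPrv : MF → Prop := ExtPrv (Set.range fun n => MF.dian n MF.top)

/-- GLS = GL + {□p → p}. -/
def GLSPrv : MF → Prop := ExtPrv {MF.imp (MF.box (MF.var 0)) (MF.var 0)}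

/-- F_s = □^{s+1}⊥ → □^s⊥. -/
def Fmla (s : ℕ) : MF := MF.imp (MF.boxn (s+1) MF.fal) (MF.boxn s MF.fal)

/-- GL + {¬F_s}. -/
def GLFPrv (s : ℕ) : MF → Prop := ExtPrv {MF.neg (Fmla s)}

/-- The arithmetical interpretation `f_T` determined by an assignment `g` of
arithmetic sentences to propositional variables: commutes with the
connectives and sends `□B` to `Pr_T(⌜f_T(B)⌝)`. -/
def PASetup.minterp (S : PASetup) (g : ℕ → S.Sent) : MF → S.Sent
  | MF.var n => g n
  | MF.fal => S.fal
  | MF.imp A B => S.imp (S.minterp g A) (S.minterp g B)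
  | MF.box A => S.pr (S.minterp g A)

namespace NTAux
open MF

abbrev Val := MF → Bool

def Resp (v : Val) : Prop :=
  (∀ B C, v (imp B C) = (!(v B) || v C)) ∧ v fal = false

lemma resp_neg {v : Val} (h : Resp v) (X : MF) : v (neg X) = !(v X) := by
  simp [MF.neg, h.1, h.2]

lemma resp_top {v : Val} (h : Resp v) : v top = true := by
  simp [MF.top, resp_neg h, h.2]

lemma resp_conj {v : Val} (h : Resp v) (X Y : MF) : v (conj X Y) = (v X && v Y) := by
  simp [MF.conj, resp_neg h, h.1]

def lconj : List MF → MF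
  | [] => top
  | C :: L => conj C (lconj L)

lemma resp_lconj {v : Val} (h : Resp v) : ∀ L : List MF, v (lconj L) = L.all (fun C => v C)
  | [] => by simp [lconj, resp_top h]
  | C :: L => by simp [lconj, resp_conj h, resp_lconj h L]

lemma glTaut {X : MF} (h : ∀ v : Val, Resp v → v X = true) : GLPrv X :=
  GLPrv.taut (fun v h1 h2 => h v ⟨h1, h2⟩)

lemma glTC1 {X Y : MF} (hsem : ∀ v : Val, Resp v → v X = true → v Y = true)
    (hX : GLPrv X) : GLPrv Y := by
  refine GLPrv.mp (glTaut ?_) hX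
  intro v hv
  rw [hv.1]
  cases hx : v X with
  | false => simp
  | true => simp [hsem v hv hx]

lemma glTC2 {X1 X2 Y : MF}
    (hsem : ∀ v : Val, Resp v → v X1 = true → v X2 = true → v Y = true)
    (h1 : GLPrv X1) (h2 : GLPrv X2) : GLPrv Y := by
  refine GLPrv.mp (glTC1 (Y := imp X2 Y) ?_ h1) h2
  intro v hv hx1
  rw [hv.1]
  cases hx2 : v X2 with
  | false => simp
  | true => simp [hsem v hv hx1 hx2]

lemma glTC3 {X1 X2 X3 Y : MF}
    (hsem : ∀ v : Val, Resp v → v X1 = true → v X2 = true → v X3 = true → v Y = true)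
    (h1 : GLPrv X1) (h2 : GLPrv X2) (h3 : GLPrv X3) : GLPrv Y := by
  refine GLPrv.mp (glTC2 (Y := imp X3 Y) ?_ h1 h2) h3
  intro v hv hx1 hx2
  rw [hv.1]
  cases hx3 : v X3 with
  | false => simp
  | true => simp [hsem v hv hx1 hx2 hx3]

lemma glTC4 {X1 X2 X3 X4 Y : MF}
    (hsem : ∀ v : Val, Resp v → v X1 = true → v X2 = true → v X3 = true → v X4 = true → v Y = true)
    (h1 : GLPrv X1) (h2 : GLPrv X2) (h3 : GLPrv X3) (h4 : GLPrv X4) : GLPrv Y := by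
  refine GLPrv.mp (glTC3 (Y := imp X4 Y) ?_ h1 h2 h3) h4
  intro v hv hx1 hx2 hx3
  rw [hv.1]
  cases hx4 : v X4 with
  | false => simp
  | true => simp [hsem v hv hx1 hx2 hx3 hx4]

lemma glBoxMono {X Y : MF} (h : GLPrv (imp X Y)) : GLPrv (imp (box X) (box Y)) :=
  GLPrv.mp (GLPrv.k X Y) (GLPrv.nec h)

lemma glImpTrans {X Y Z : MF} (h1 : GLPrv (imp X Y)) (h2 : GLPrv (imp Y Z)) :
    GLPrv (imp X Z) := by
  refine glTC2 ?_ h1 h2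
  intro v hv hx1 hx2
  rw [hv.1] at *
  cases hx : v X <;> cases hy : v Y <;> cases hz : v Z <;> simp_all

lemma gl4 {X : MF} : GLPrv (imp (box X) (box (box X))) := by
  set E := conj X (box X) with hE
  have hEX : GLPrv (imp E X) := by
    apply glTaut; intro v hv
    rw [hv.1, hE, resp_conj hv]
    cases v X <;> simp
  have hEbX : GLPrv (imp E (box X)) := by
    apply glTaut; intro v hv
    rw [hv.1, hE, resp_conj hv]
    cases v (box X) <;> simp
  have hbE : GLPrv (imp (box E) (box X)) := glBoxMono hEX
  have h1 : GLPrv (imp X (imp (box E) E)) := by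
    refine glTC1 ?_ hbE
    intro v hv hb
    rw [hv.1] at hb ⊢
    rw [hv.1, hE, resp_conj hv]
    cases hx : v X
    · simp
    · cases hbe : v (box E)
      · simp
      · rw [hbe] at hb; simp at hb; simp [hb]
  have h2 : GLPrv (imp (box X) (box (imp (box E) E))) := glBoxMono h1
  have h3 : GLPrv (imp (box (imp (box E) E)) (box E)) := GLPrv.lob E
  have h4 : GLPrv (imp (box E) (box (box X))) := glBoxMono hEbX
  exact glImpTrans (glImpTrans h2 h3) h4

lemma lconj_proj {L : List MF} {C : MF} (h : C ∈ L) : GLPrv (imp (lconj L) C) := by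
  apply glTaut; intro v hv
  rw [hv.1, resp_lconj hv]
  cases hall : L.all (fun C => v C)
  · simp
  · simp only [List.all_eq_true] at hall
    simp [hall C h]

lemma lconj_intro {X : MF} : ∀ {L : List MF}, (∀ C ∈ L, GLPrv (imp X C)) →
    GLPrv (imp X (lconj L))
  | [], _ => by
    apply glTaut; intro v hv
    rw [hv.1, resp_lconj hv]
    simp
  | C :: L, h => by
    have h1 : GLPrv (imp X C) := h C (List.mem_cons_self ..)
    have h2 : GLPrv (imp X (lconj L)) := lconj_intro (fun D hD => h D (List.mem_cons_of_mem _ hD))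
    refine glTC2 ?_ h1 h2
    intro v hv hx1 hx2
    rw [hv.1] at hx1 hx2 ⊢
    simp only [lconj, resp_conj hv]
    cases hx : v X <;> simp_all

lemma glCollect : ∀ L : List MF, GLPrv (imp (lconj (L.map box)) (box (lconj L)))
  | [] => by
    have h0 : GLPrv (box (lconj [])) := GLPrv.nec (glTaut (fun v hv => by
      rw [resp_lconj hv]; simp))
    refine glTC1 ?_ h0
    intro v hv hx
    rw [hv.1, hx]; simp
  | C :: L => by
    have IH := glCollect L
    have hpair : GLPrv (imp (box C) (imp (box (lconj L)) (box (conj C (lconj L))))) := by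
      have ht : GLPrv (imp C (imp (lconj L) (conj C (lconj L)))) := by
        apply glTaut; intro v hv
        rw [hv.1, hv.1, resp_conj hv]
        cases v C <;> cases v (lconj L) <;> simp
      have hb := glBoxMono ht
      have hk := GLPrv.k (lconj L) (conj C (lconj L))
      exact glImpTrans hb hk
    -- goal : imp (lconj ((C::L).map box)) (box (lconj (C::L)))
    show GLPrv (imp (lconj (box C :: L.map box)) (box (conj C (lconj L))))
    refine glTC2 ?_ IH hpair
    intro v hv h1 h2
    rw [hv.1] at *
    rw [hv.1] at h2
    simp only [lconj, resp_conj hv] at *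
    cases hbc : v (box C) <;> cases hl : v (lconj (L.map box)) <;> simp_all

end NTAux
namespace NTAux
open MF

lemma subst_boxn_negtop (s : ℕ → MF) : ∀ n, (boxn n (neg top)).subst s = boxn n (neg top)
  | 0 => by simp [MF.subst, MF.neg, MF.top, MF.boxn]
  | n+1 => by simp [MF.boxn, MF.subst, subst_boxn_negtop s n]

lemma subst_dian_top (s : ℕ → MF) (n : ℕ) : (dian n top).subst s = dian n top := by
  show imp ((boxn n (neg top)).subst s) fal = dian n top
  rw [subst_boxn_negtop]
  rfl

lemma gl_boxn_step : ∀ n, GLPrv (imp (boxn n (neg top)) (boxn (n+1) (neg top)))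
  | 0 => by
    apply glTaut; intro v hv
    rw [hv.1]
    show (!(v (boxn 0 (neg top))) || v (boxn 1 (neg top))) = true
    have : v (boxn 0 (neg top)) = false := by
      show v (neg top) = false
      rw [resp_neg hv, resp_top hv]; rfl
    rw [this]; rfl
  | n+1 => glBoxMono (gl_boxn_step n)

lemma gl_boxn_mono {j k : ℕ} (h : j ≤ k) :
    GLPrv (imp (boxn j (neg top)) (boxn k (neg top))) := by
  induction k with
  | zero =>
    have : j = 0 := Nat.le_zero.mp h
    subst this
    apply glTaut; intro v hv; rw [hv.1]; cases v (boxn 0 (neg top)) <;> simp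
  | succ k ih =>
    rcases Nat.eq_or_lt_of_le h with rfl | hlt
    · apply glTaut; intro v hv; rw [hv.1]; cases v (boxn (k+1) (neg top)) <;> simp
    · exact glImpTrans (ih (Nat.lt_succ_iff.mp hlt)) (gl_boxn_step k)

lemma gl_dian_mono {j k : ℕ} (h : j ≤ k) : GLPrv (imp (dian k top) (dian j top)) := by
  have hb := gl_boxn_mono h
  refine glTC1 ?_ hb
  intro v hv hx
  rw [hv.1] at hx
  show v (imp (neg (boxn k (neg top))) (neg (boxn j (neg top)))) = true
  rw [hv.1, resp_neg hv, resp_neg hv]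
  cases hj : v (boxn j (neg top)) <;> cases hk : v (boxn k (neg top)) <;> simp_all

lemma glomega_bound {B : MF} (h : GLomegaPrv B) : ∃ m, GLPrv (imp (dian m top) B) := by
  induction h with
  | gl h =>
    refine ⟨0, glTC1 ?_ h⟩
    intro v hv hx
    rw [hv.1, hx]; simp
  | ax s hA =>
    obtain ⟨n, rfl⟩ := hA
    rw [subst_dian_top]
    refine ⟨n, glTaut ?_⟩
    intro v hv
    rw [hv.1]; cases v (dian n top) <;> simp
  | mp h1 h2 ih1 ih2 =>
    obtain ⟨m1, g1⟩ := ih1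
    obtain ⟨m2, g2⟩ := ih2
    refine ⟨max m1 m2, ?_⟩
    have d1 := gl_dian_mono (le_max_left m1 m2)
    have d2 := gl_dian_mono (le_max_right m1 m2)
    refine glTC4 ?_ g1 g2 d1 d2
    intro v hv hx1 hx2 hx3 hx4
    simp only [hv.1] at hx1 hx2 hx3 hx4 ⊢
    cases hm : v (dian (max m1 m2) top) <;> simp_all

end NTAux
namespace NTAux
open MF

structure KM where
  W : Type
  R : W → W → Prop
  V : ℕ → W → Prop
  fin : Finite W
  tr : ∀ {x y z}, R x y → R y z → R x z
  ir : ∀ {x}, ¬ R x x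

def KM.forces (M : KM) : MF → M.W → Prop
  | .var n, w => M.V n w
  | .fal, _ => False
  | .imp B C, w => M.forces B w → M.forces C w
  | .box B, w => ∀ u, M.R w u → M.forces B u

theorem glSound {A : MF} (h : GLPrv A) (M : KM) : ∀ w : M.W, M.forces A w := by
  induction h with
  | @taut A h =>
    intro w
    classical
    by_contra hc
    let v : Val := fun C => if M.forces C w then true else false
    have hv1 : ∀ B C, v (imp B C) = (!(v B) || v C) := by
      intro B C
      by_cases hb : M.forces B w <;> by_cases hc2 : M.forces C w <;>
        simp [v, KM.forces, hb, hc2]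
    have hv2 : v fal = false := by simp [v, KM.forces]; exact @decide_eq_false _ (Classical.propDecidable _) id
    have := h v hv1 hv2
    simp [v, hc] at this
  | k A B =>
    intro w h1 h2 u hu
    exact h1 u hu (h2 u hu)
  | lob A =>
    intro w hba
    letI := M.fin
    letI : IsTrans M.W (fun a b => M.R b a) := ⟨fun a b c h1 h2 => M.tr h2 h1⟩
    letI : IsIrrefl M.W (fun a b => M.R b a) := ⟨fun a h => M.ir h⟩
    have wf : WellFounded (fun a b : M.W => M.R b a) :=
      Finite.wellFounded_of_trans_of_irrefl _
    intro u hwu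
    induction u using WellFounded.induction wf with
    | _ u IH =>
      refine hba u hwu ?_
      intro z huz
      exact IH z huz (M.tr hwu huz)
  | mp h1 h2 ih1 ih2 =>
    intro w
    exact ih1 w (ih2 w)
  | nec h ih =>
    intro w u hu
    exact ih u

lemma forces_dian_zero (M : KM) (w : M.W) : M.forces (dian 0 top) w := by
  intro h
  exact h (fun hf => hf)

lemma forces_dian_succ {M : KM} {w : M.W} {n : ℕ} :
    M.forces (dian (n+1) top) w ↔ ∃ u, M.R w u ∧ M.forces (dian n top) u := by
  constructor
  · intro h
    by_contra hc
    push_neg at hc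
    apply h
    intro u hu
    have h2 := hc u hu
    -- h2 : ¬ M.forces (dian n top) u, i.e. ¬¬ forces (boxn n (neg top)) u
    by_contra hb
    exact h2 (fun hf => hb hf)
  · rintro ⟨u, hu, hd⟩ hbox
    exact hd (hbox u hu)

lemma forces_dian_mono (M : KM) : ∀ (n : ℕ) (w : M.W),
    M.forces (dian (n+1) top) w → M.forces (dian n top) w := by
  intro n
  induction n with
  | zero => intro w _; exact forces_dian_zero M w
  | succ k ih =>
    intro w h
    rcases forces_dian_succ.1 h with ⟨u, hu, hd⟩
    exact forces_dian_succ.2 ⟨u, hu, ih u hd⟩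

lemma forces_box_persist {M : KM} {w u : M.W} {X : MF} (hwu : M.R w u)
    (h : M.forces (box X) w) : M.forces (box X) u :=
  fun z hz => h z (M.tr hwu hz)

/-! subformula lemmas -/

lemma mem_subF_self : ∀ A : MF, A ∈ A.subF := by
  intro A
  cases A <;> simp [MF.subF]

lemma subF_trans : ∀ {A B : MF}, B ∈ A.subF → B.subF ⊆ A.subF := by
  intro A
  induction A with
  | var n =>
    intro B h
    simp [MF.subF] at h
    subst h
    exact fun x hx => hx
  | fal =>
    intro B h
    simp [MF.subF] at h
    subst h
    exact fun x hx => hx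
  | imp X Y ihX ihY =>
    intro B h
    simp only [MF.subF, Finset.mem_insert, Finset.mem_union] at h
    rcases h with rfl | h | h
    · exact fun x hx => hx
    · exact (ihX h).trans (by
        intro x hx
        simp only [MF.subF, Finset.mem_insert, Finset.mem_union]
        exact Or.inr (Or.inl hx))
    · exact (ihY h).trans (by
        intro x hx
        simp only [MF.subF, Finset.mem_insert, Finset.mem_union]
        exact Or.inr (Or.inr hx))
  | box X ihX =>
    intro B h
    simp only [MF.subF, Finset.mem_insert] at h
    rcases h with rfl | h
    · exact fun x hx => hx
    · exact (ihX h).trans (by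
        intro x hx
        simp only [MF.subF, Finset.mem_insert]
        exact Or.inr hx)

lemma subF_imp_left {R X Y : MF} (h : imp X Y ∈ R.subF) : X ∈ R.subF :=
  subF_trans h (by
    simp only [MF.subF, Finset.mem_insert, Finset.mem_union]
    exact Or.inr (Or.inl (mem_subF_self X)))

lemma subF_imp_right {R X Y : MF} (h : imp X Y ∈ R.subF) : Y ∈ R.subF :=
  subF_trans h (by
    simp only [MF.subF, Finset.mem_insert, Finset.mem_union]
    exact Or.inr (Or.inr (mem_subF_self Y)))

lemma subF_box_down {R X : MF} (h : box X ∈ R.subF) : X ∈ R.subF :=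
  subF_trans h (by
    simp only [MF.subF, Finset.mem_insert]
    exact Or.inr (mem_subF_self X))

def sz : MF → ℕ
  | .var _ => 1
  | .fal => 1
  | .imp A B => sz A + sz B + 1
  | .box A => sz A + 1

lemma sz_le_of_mem_subF : ∀ {A B : MF}, B ∈ A.subF → sz B ≤ sz A := by
  intro A
  induction A with
  | var n => intro B h; simp [MF.subF] at h; subst h; exact le_refl _
  | fal => intro B h; simp [MF.subF] at h; subst h; exact le_refl _
  | imp X Y ihX ihY =>
    intro B h
    simp only [MF.subF, Finset.mem_insert, Finset.mem_union] at h
    rcases h with rfl | h | h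
    · exact le_refl _
    · exact (ihX h).trans (by simp [sz]; omega)
    · exact (ihY h).trans (by simp [sz]; omega)
  | box X ihX =>
    intro B h
    simp only [MF.subF, Finset.mem_insert] at h
    rcases h with rfl | h
    · exact le_refl _
    · exact (ihX h).trans (by simp [sz])

lemma box_not_mem_subF (A : MF) : box A ∉ A.subF := by
  intro h
  have := sz_le_of_mem_subF h
  rw [show sz (box A) = sz A + 1 from rfl] at this
  omega

lemma isBox_iff {C : MF} : isBox C = true ↔ ∃ D, C = box D := by
  cases C <;> simp [MF.isBox]

lemma card_boxes_boxA (A : MF) :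
    (((box A).subF).filter (fun B => isBox B = true)).card = cx A + 1 := by
  show ((insert (box A) A.subF).filter (fun B => isBox B = true)).card = _
  rw [Finset.filter_insert]
  rw [if_pos (by simp [MF.isBox])]
  rw [Finset.card_insert_of_notMem (by
    intro h
    exact box_not_mem_subF A (Finset.mem_filter.mp h).1)]
  rfl

end NTAux
namespace NTAux
open MF

/-! ## Canonical model: completeness of GL -/

def Phi (ψ : MF) : Finset MF := ψ.subF

noncomputable def sgn (t : Val) (C : MF) : MF := if t C then C else neg C

noncomputable def chi (ψ : MF) (t : Val) : MF := lconj ((Phi ψ).toList.map (sgn t))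

def Ok (ψ : MF) (t : Val) : Prop := ¬ GLPrv (neg (chi ψ t))

def Wc (ψ : MF) := {t : Val // Ok ψ t ∧ ∀ C, C ∉ Phi ψ → t C = false}

lemma val_sgn {v : Val} (hv : Resp v) (t : Val) (C : MF) :
    (v (sgn t C) = true) ↔ (v C = t C) := by
  unfold sgn
  cases h : t C
  · rw [if_neg (by simp [h]), resp_neg hv]
    cases hc : v C <;> simp
  · rw [if_pos (by simp [h])]

lemma val_chi {v : Val} (ψ : MF) (hv : Resp v) (t : Val) :
    v (chi ψ t) = true ↔ ∀ C ∈ Phi ψ, v C = t C := by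
  unfold chi
  rw [resp_lconj hv]
  rw [List.all_eq_true]
  constructor
  · intro h C hC
    exact (val_sgn hv t C).1 (h _ (List.mem_map_of_mem (Finset.mem_toList.mpr hC)))
  · intro h Y hY
    obtain ⟨C, hC, rfl⟩ := List.mem_map.mp hY
    exact (val_sgn hv t C).2 (h C (Finset.mem_toList.mp hC))

lemma glFromChi {ψ : MF} {t : Val} {X : MF}
    (h : ∀ v : Val, Resp v → (∀ C ∈ Phi ψ, v C = t C) → v X = true) :
    GLPrv (imp (chi ψ t) X) := by
  apply glTaut
  intro v hv
  rw [hv.1]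
  cases hc : v (chi ψ t)
  · simp
  · simp [h v hv ((val_chi ψ hv t).1 hc)]

lemma chi_proj {ψ : MF} {t : Val} {Y : MF} (hY : Y ∈ Phi ψ) (ht : t Y = true) :
    GLPrv (imp (chi ψ t) Y) :=
  glFromChi (fun v hv hall => by rw [hall Y hY]; exact ht)

lemma wc_fal {ψ : MF} (t : Wc ψ) (h : fal ∈ Phi ψ) : t.1 fal = false := by
  by_contra hne
  apply t.2.1
  apply glTaut
  intro v hv
  rw [resp_neg hv]
  cases hchi : v (chi ψ t.1)
  · simp
  · exfalso
    have h1 := (val_chi ψ hv t.1).1 hchi fal h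
    rw [hv.2] at h1
    cases hb : t.1 fal
    · exact hne hb
    · rw [hb] at h1; cases h1

lemma wc_imp {ψ : MF} (t : Wc ψ) {B D : MF} (h : imp B D ∈ Phi ψ) :
    t.1 (imp B D) = (!(t.1 B) || t.1 D) := by
  have hB : B ∈ Phi ψ := subF_imp_left h
  have hD : D ∈ Phi ψ := subF_imp_right h
  by_contra hne
  apply t.2.1
  apply glTaut
  intro v hv
  rw [resp_neg hv]
  cases hchi : v (chi ψ t.1)
  · simp
  · exfalso
    have hall := (val_chi ψ hv t.1).1 hchi
    apply hne
    rw [← hall _ h, ← hall _ hB, ← hall _ hD]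
    exact hv.1 B D

lemma finite_Wc (ψ : MF) : Finite (Wc ψ) := by
  classical
  let f : Wc ψ → {s : Finset MF // s ∈ (Phi ψ).powerset} := fun t =>
    ⟨(Phi ψ).filter (fun C => t.1 C = true), Finset.mem_powerset.mpr (Finset.filter_subset _ _)⟩
  have hf : Function.Injective f := by
    intro a b hab
    have hab' : (Phi ψ).filter (fun C => a.1 C = true) =
        (Phi ψ).filter (fun C => b.1 C = true) := congrArg Subtype.val hab
    apply Subtype.ext
    funext C
    by_cases hC : C ∈ Phi ψ
    · have hext := Finset.ext_iff.mp hab' C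
      simp only [Finset.mem_filter, hC, true_and] at hext
      cases ha : a.1 C <;> cases hb : b.1 C
      · rfl
      · exfalso; rw [ha, hb] at hext; simp at hext
      · exfalso; rw [ha, hb] at hext; simp at hext
      · rfl
    · rw [a.2.2 C hC, b.2.2 C hC]
  exact Finite.of_injective f hf

def Rc (ψ : MF) (t u : Wc ψ) : Prop :=
  (∀ D, box D ∈ Phi ψ → t.1 (box D) = true → u.1 (box D) = true ∧ u.1 D = true) ∧
  (∃ D, box D ∈ Phi ψ ∧ u.1 (box D) = true ∧ t.1 (box D) = false)

noncomputable def Mc (ψ : MF) : KM where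
  W := Wc ψ
  R := Rc ψ
  V := fun n t => t.1 (var n) = true
  fin := finite_Wc ψ
  tr := by
    rintro x y z ⟨h1, _⟩ ⟨h3, ⟨D, hD, hDz, hDy⟩⟩
    refine ⟨fun E hE hxE => h3 E hE (h1 E hE hxE).1, ⟨D, hD, hDz, ?_⟩⟩
    cases hxD : x.1 (box D)
    · rfl
    · have := (h1 D hD hxD).1
      rw [hDy] at this
      cases this
  ir := by
    rintro x ⟨_, ⟨D, _, hDt, hDf⟩⟩
    rw [hDt] at hDf
    cases hDf

/-! Lindenbaum -/

lemma lindenbaum : ∀ (l : List MF), l.Nodup → ∀ X : MF, ¬ GLPrv (neg X) →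
    ∃ t : Val, ¬ GLPrv (neg (conj X (lconj (l.map (sgn t)))))
  | [], _, X, hX => ⟨fun _ => false, fun hc => hX (glTC1 (by
      intro v hv h1
      rw [resp_neg hv, resp_conj hv] at h1
      rw [resp_neg hv]
      simp only [List.map_nil] at h1
      rw [resp_lconj hv] at h1
      simp only [List.all_nil, Bool.and_true] at h1
      exact h1) hc)⟩
  | C :: l, hnd, X, hX => by
    rw [List.nodup_cons] at hnd
    have hex : ∃ b : Bool, ¬ GLPrv (neg (conj X (sgn (fun _ => b) C))) := by
      by_contra hc
      push_neg at hc
      apply hX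
      have h1 := hc true
      have h2 := hc false
      have e1 : sgn (fun _ => true) C = C := by simp [sgn]
      have e2 : sgn (fun _ => false) C = neg C := by simp [sgn]
      rw [e1] at h1
      rw [e2] at h2
      refine glTC2 ?_ h1 h2
      intro v hv hx1 hx2
      rw [resp_neg hv, resp_conj hv] at hx1
      rw [resp_neg hv, resp_conj hv, resp_neg hv] at hx2
      rw [resp_neg hv]
      cases hx : v X <;> cases hc2 : v C <;> simp_all
    obtain ⟨b, hb⟩ := hex
    obtain ⟨t, ht⟩ := lindenbaum l hnd.2 (conj X (sgn (fun _ => b) C)) hb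
    classical
    refine ⟨fun D => if D = C then b else t D, ?_⟩
    intro hcon
    apply ht
    have hmap : l.map (sgn (fun D => if D = C then b else t D)) = l.map (sgn t) := by
      apply List.map_congr_left
      intro D hD
      have hne : D ≠ C := fun e => hnd.1 (e ▸ hD)
      simp [sgn, hne]
    have hsgnC : sgn (fun D => if D = C then b else t D) C = sgn (fun _ => b) C := by
      simp [sgn]
    rw [List.map_cons, hmap, hsgnC] at hcon
    refine glTC1 ?_ hcon
    intro v hv h1
    rw [resp_neg hv, resp_conj hv] at h1
    rw [resp_neg hv, resp_conj hv, resp_conj hv]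
    simp only [lconj, resp_conj hv] at h1
    cases hx : v X <;> cases hs : v (sgn (fun _ => b) C) <;>
      cases hl : v (lconj (List.map (sgn t) l)) <;> simp_all

lemma lindenbaum' (ψ : MF) (X : MF) (hX : ¬ GLPrv (neg X)) :
    ∃ u : Wc ψ, ¬ GLPrv (neg (conj X (chi ψ u.1))) := by
  obtain ⟨t, ht⟩ := lindenbaum (Phi ψ).toList (Finset.nodup_toList _) X hX
  classical
  have hmap : (Phi ψ).toList.map (sgn (fun D => if D ∈ Phi ψ then t D else false)) =
      (Phi ψ).toList.map (sgn t) := by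
    apply List.map_congr_left
    intro D hD
    have hmem : D ∈ Phi ψ := Finset.mem_toList.mp hD
    simp [sgn, hmem]
  have hchi : chi ψ (fun D => if D ∈ Phi ψ then t D else false) =
      lconj ((Phi ψ).toList.map (sgn t)) := by rw [chi, hmap]
  have hcons : ¬ GLPrv (neg (conj X (chi ψ (fun D => if D ∈ Phi ψ then t D else false)))) := by
    rw [hchi]; exact ht
  have hOk : Ok ψ (fun D => if D ∈ Phi ψ then t D else false) := by
    intro hc
    apply hcons
    refine glTC1 ?_ hc
    intro v hv h1
    rw [resp_neg hv] at h1
    rw [resp_neg hv, resp_conj hv]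
    cases v X <;> simp_all
  exact ⟨⟨_, hOk, fun C hC => by simp [hC]⟩, hcons⟩

lemma key_val {ψ : MF} {X Y : MF} {b : Bool} (u : Wc ψ)
    (hcons : ¬ GLPrv (neg (conj X (chi ψ u.1))))
    (hY : Y ∈ Phi ψ) (hmem : ∀ v : Val, Resp v → v X = true → v Y = b) : u.1 Y = b := by
  by_contra hne
  apply hcons
  apply glTaut
  intro v hv
  rw [resp_neg hv, resp_conj hv]
  cases hX : v X
  · simp
  · cases hchi : v (chi ψ u.1)
    · simp
    · exfalso
      have h1 := (val_chi ψ hv u.1).1 hchi Y hY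
      have h2 := hmem v hv hX
      exact hne (h1.symm.trans h2)

end NTAux
namespace NTAux
open MF

lemma exists_succ {ψ : MF} (t : Wc ψ) {C : MF} (hboxC : box C ∈ Phi ψ)
    (hfalse : t.1 (box C) = false) :
    ∃ u : Wc ψ, Rc ψ t u ∧ u.1 C = false := by
  classical
  set Lb : List MF := ((Phi ψ).filter (fun X => isBox X = true ∧ t.1 X = true)).toList with hLbdef
  have memLb : ∀ {X : MF}, X ∈ Lb ↔ (X ∈ Phi ψ ∧ isBox X = true ∧ t.1 X = true) := by
    intro X
    rw [hLbdef, Finset.mem_toList, Finset.mem_filter]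
  set L2 : List MF := Lb ++ Lb.map unbox with hL2def
  set Sq : List MF := L2 ++ [box C, neg C] with hSqdef
  -- consistency of Sq
  have hcons : ¬ GLPrv (neg (lconj Sq)) := by
    intro hS
    -- GL ⊢ lconj L2 → (box C → C)
    have h2 : GLPrv (imp (lconj L2) (imp (box C) C)) := by
      refine glTC1 ?_ hS
      intro v hv hns
      rw [resp_neg hv, resp_lconj hv] at hns
      rw [hv.1, hv.1, resp_lconj hv]
      cases hl2 : (L2.all fun C => v C) with
      | false => simp
      | true =>
        cases hbc : v (box C) with
        | false => simp
        | true =>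
          cases hcc : v C with
          | true => simp
          | false =>
            exfalso
            rw [hSqdef] at hns
            rw [List.all_append] at hns
            simp only [hl2, List.all_cons, List.all_nil, hbc, resp_neg hv, hcc] at hns
            simp at hns
    have h3 : GLPrv (imp (box (lconj L2)) (box (imp (box C) C))) := glBoxMono h2
    have h5 : GLPrv (imp (box (lconj L2)) (box C)) := glImpTrans h3 (GLPrv.lob C)
    have h7 : GLPrv (imp (lconj (L2.map box)) (box C)) := glImpTrans (glCollect L2) h5
    have h8 : GLPrv (imp (chi ψ t.1) (lconj (L2.map box))) := by
      apply lconj_intro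
      intro X hX
      obtain ⟨Y, hY, rfl⟩ := List.mem_map.mp hX
      rw [hL2def, List.mem_append] at hY
      rcases hY with hY | hY
      · -- Y ∈ Lb : Y itself a box formula of t; need chi → box Y ; Y = box D
        have hm := memLb.mp hY
        obtain ⟨D, rfl⟩ := isBox_iff.mp hm.2.1
        exact glImpTrans (chi_proj hm.1 hm.2.2) gl4
      · -- Y = unbox Z, Z = box D ∈ Lb ; box Y = Z
        obtain ⟨Z, hZ, rfl⟩ := List.mem_map.mp hY
        have hm := memLb.mp hZ
        obtain ⟨D, rfl⟩ := isBox_iff.mp hm.2.1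
        exact chi_proj hm.1 hm.2.2
    have h9 : GLPrv (imp (chi ψ t.1) (box C)) := glImpTrans h8 h7
    have h10 : GLPrv (imp (chi ψ t.1) (neg (box C))) := by
      apply glFromChi
      intro v hv hall
      rw [resp_neg hv, hall _ hboxC, hfalse]
      rfl
    apply t.2.1
    refine glTC2 ?_ h9 h10
    intro v hv h1 h2
    rw [hv.1] at h1 h2
    rw [resp_neg hv] at h2 ⊢
    cases hchi : v (chi ψ t.1) <;> cases hb : v (box C) <;> simp_all
  obtain ⟨u, hu⟩ := lindenbaum' ψ (lconj Sq) hcons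
  have hproj : ∀ {Y : MF}, Y ∈ Sq → ∀ v : Val, Resp v → v (lconj Sq) = true → v Y = true := by
    intro Y hY v hv hall
    rw [resp_lconj hv] at hall
    exact List.all_eq_true.mp hall Y hY
  have hmem_boxC : box C ∈ Sq := by
    rw [hSqdef, List.mem_append]
    exact Or.inr (by simp)
  have hmem_negC : neg C ∈ Sq := by
    rw [hSqdef, List.mem_append]
    exact Or.inr (by simp)
  refine ⟨u, ⟨?_, ⟨C, hboxC, ?_, hfalse⟩⟩, ?_⟩
  · intro D hD htD
    have hbD : box D ∈ Lb := memLb.mpr ⟨hD, by simp [MF.isBox], htD⟩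
    have hmem1 : box D ∈ Sq := by
      rw [hSqdef, List.mem_append, hL2def, List.mem_append]
      exact Or.inl (Or.inl hbD)
    have hmem2 : D ∈ Sq := by
      rw [hSqdef, List.mem_append, hL2def, List.mem_append]
      refine Or.inl (Or.inr ?_)
      exact List.mem_map.mpr ⟨box D, hbD, rfl⟩
    exact ⟨key_val u hu hD (fun v hv hx => hproj hmem1 v hv hx),
           key_val u hu (subF_box_down hD) (fun v hv hx => hproj hmem2 v hv hx)⟩
  · exact key_val u hu hboxC (fun v hv hx => hproj hmem_boxC v hv hx)
  · refine key_val u hu (subF_box_down hboxC) ?_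
    intro v hv hx
    have h1 := hproj hmem_negC v hv hx
    rw [resp_neg hv] at h1
    cases hc : v C
    · rfl
    · rw [hc] at h1; cases h1

theorem truth_lemma (ψ : MF) : ∀ C : MF, C ∈ Phi ψ → ∀ t : Wc ψ,
    ((Mc ψ).forces C t ↔ t.1 C = true) := by
  intro C
  induction C with
  | var n =>
    intro h t
    exact Iff.rfl
  | fal =>
    intro h t
    constructor
    · intro hf; cases hf
    · intro hf; rw [wc_fal t h] at hf; cases hf
  | imp B D ihB ihD =>
    intro h t
    have hB : B ∈ Phi ψ := subF_imp_left h
    have hD : D ∈ Phi ψ := subF_imp_right h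
    show ((Mc ψ).forces B t → (Mc ψ).forces D t) ↔ _
    rw [ihB hB t, ihD hD t, wc_imp t h]
    cases hb : t.1 B <;> cases hd : t.1 D <;> simp
  | box D ihD =>
    intro h t
    have hD : D ∈ Phi ψ := subF_box_down h
    constructor
    · intro hf
      cases hval : t.1 (box D) with
      | true => rfl
      | false =>
        exfalso
        obtain ⟨u, hRu, huD⟩ := exists_succ t h hval
        have := (ihD hD u).1 (hf u hRu)
        rw [huD] at this
        cases this
    · intro htrue u hRu
      exact (ihD hD u).2 (hRu.1 D h htrue).2

theorem gl_completeness {ψ : MF} (h : ¬ GLPrv ψ) :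
    ∃ t : Wc ψ, ¬ (Mc ψ).forces ψ t := by
  have h0 : ¬ GLPrv (neg (neg ψ)) := by
    intro hc
    apply h
    refine glTC1 ?_ hc
    intro v hv h1
    rw [resp_neg hv, resp_neg hv] at h1
    cases hp : v ψ
    · rw [hp] at h1; simp at h1
    · rfl
  obtain ⟨u, hu⟩ := lindenbaum' ψ (neg ψ) h0
  have hval : u.1 ψ = false := by
    refine key_val u hu (mem_subF_self ψ) ?_
    intro v hv hx
    rw [resp_neg hv] at hx
    cases hp : v ψ
    · rfl
    · rw [hp] at hx; cases hx
  refine ⟨u, fun hf => ?_⟩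
  have := (truth_lemma ψ ψ (mem_subF_self ψ) u).1 hf
  rw [hval] at this
  cases this

end NTAux
namespace NTAux
open MF

/-! ## Cloning a world to stretch depth -/

section Clone
variable (M : KM) (x0 : M.W) (N : ℕ)

def cR : (M.W ⊕ Fin N) → (M.W ⊕ Fin N) → Prop
  | .inl x, .inl y => M.R x y
  | .inl x, .inr _ => M.R x x0
  | .inr j, .inr k => j < k
  | .inr _, .inl y => y = x0 ∨ M.R x0 y

def cM : KM where
  W := M.W ⊕ Fin N
  R := cR M x0 N
  V := fun n w => match w with
    | .inl x => M.V n x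
    | .inr _ => M.V n x0
  fin := by
    letI := M.fin
    infer_instance
  tr := by
    rintro (x | j) (y | k) (z | l) h1 h2
    · exact M.tr h1 h2
    · exact M.tr h1 h2
    · rcases h2 with rfl | h2
      · exact h1
      · exact M.tr h1 h2
    · exact h1
    · rcases h1 with rfl | h1
      · exact Or.inr h2
      · exact Or.inr (M.tr h1 h2)
    · rcases h1 with rfl | h1
      · exact absurd h2 M.ir
      · exact absurd (M.tr h1 h2) M.ir
    · exact h2
    · exact lt_trans h1 h2
  ir := by
    rintro (x | j) h
    · exact M.ir h
    · exact lt_irrefl _ h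

variable {M x0 N}

lemma clone_truth (A : MF)
    (hclone : ∀ D, box D ∈ (box A).subF → M.forces (box D) x0 → M.forces D x0) :
    ∀ C ∈ (box A).subF,
      (∀ x : M.W, ((cM M x0 N).forces C (.inl x) ↔ M.forces C x)) ∧
      (∀ j : Fin N, ((cM M x0 N).forces C (.inr j) ↔ M.forces C x0)) := by
  intro C
  induction C with
  | var n =>
    intro h
    exact ⟨fun x => Iff.rfl, fun j => Iff.rfl⟩
  | fal =>
    intro h
    exact ⟨fun x => Iff.rfl, fun j => Iff.rfl⟩
  | imp B D ihB ihD =>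
    intro h
    have hB := subF_imp_left h
    have hD := subF_imp_right h
    constructor
    · intro x
      show ((cM M x0 N).forces B _ → (cM M x0 N).forces D _) ↔ (M.forces B x → M.forces D x)
      rw [(ihB hB).1 x, (ihD hD).1 x]
    · intro j
      show ((cM M x0 N).forces B _ → (cM M x0 N).forces D _) ↔ (M.forces B x0 → M.forces D x0)
      rw [(ihB hB).2 j, (ihD hD).2 j]
  | box D ihD =>
    intro h
    have hD : D ∈ (box A).subF := subF_box_down h
    have IH := ihD hD
    constructor
    · intro x
      constructor
      · intro hf u hu
        exact (IH.1 u).1 (hf (.inl u) hu)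
      · intro hf w hw
        match w with
        | .inl u => exact (IH.1 u).2 (hf u hw)
        | .inr j => exact (IH.2 j).2 (hf x0 hw)
    · intro j
      constructor
      · intro hf u hu
        exact (IH.1 u).1 (hf (.inl u) (Or.inr hu))
      · intro hf w hw
        have hD0 : M.forces D x0 := hclone D h hf
        match w with
        | .inl u =>
          rcases hw with rfl | hw
          · exact (IH.1 u).2 hD0
          · exact (IH.1 u).2 (hf u hw)
        | .inr k => exact (IH.2 k).2 hD0

lemma clone_dian : ∀ (k : ℕ) (j : Fin N), j.1 + k < N →
    (cM M x0 N).forces (dian k top) (.inr j) := by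
  intro k
  induction k with
  | zero => intro j _; exact forces_dian_zero _ _
  | succ k ih =>
    intro j hj
    have hlt : j.1 + 1 < N := by omega
    refine forces_dian_succ.2 ⟨.inr ⟨j.1 + 1, hlt⟩, ?_, ?_⟩
    · show j.1 < j.1 + 1
      exact Nat.lt_succ_self _
    · exact ih ⟨j.1 + 1, hlt⟩ (by show j.1 + 1 + k < N; omega)

end Clone

/-! ## Pigeonhole: finding a cloneable world -/

noncomputable def Pf (M : KM) (A : MF) (x : M.W) : Finset MF :=
  @Finset.filter _ (fun C => M.forces C x) (Classical.decPred _)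
    (((box A).subF).filter (fun B => isBox B = true))

lemma Pf_mono {M : KM} {A : MF} {x u : M.W} (hxu : M.R x u) : Pf M A x ⊆ Pf M A u := by
  intro C hC
  classical
  rw [Pf, Finset.mem_filter] at hC ⊢
  refine ⟨hC.1, ?_⟩
  obtain ⟨D, rfl⟩ := isBox_iff.mp (Finset.mem_filter.mp hC.1).2
  exact forces_box_persist hxu hC.2

lemma Pf_subset {M : KM} {A : MF} {x : M.W} :
    Pf M A x ⊆ ((box A).subF).filter (fun B => isBox B = true) := by
  intro C hC
  classical
  exact (Finset.mem_filter.mp hC).1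

lemma pigeon {M : KM} {A : MF} : ∀ (n : ℕ) (w : M.W), M.forces (dian n top) w →
    ((((box A).subF).filter (fun B => isBox B = true)) \ Pf M A w).card < n →
    ∃ p x, M.R p x ∧ (p = w ∨ M.R w p) ∧ Pf M A p = Pf M A x := by
  intro n
  induction n with
  | zero =>
    intro w _ hcard
    exact absurd hcard (Nat.not_lt_zero _)
  | succ k ih =>
    intro w hd hcard
    obtain ⟨u, hu, hdu⟩ := forces_dian_succ.1 hd
    by_cases he : Pf M A w = Pf M A u
    · exact ⟨w, u, hu, Or.inl rfl, he⟩
    · have hss : (((box A).subF).filter (fun B => isBox B = true)) \ Pf M A u ⊂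
          (((box A).subF).filter (fun B => isBox B = true)) \ Pf M A w := by
        constructor
        · intro C hC
          rw [Finset.mem_sdiff] at hC ⊢
          exact ⟨hC.1, fun hmem => hC.2 (Pf_mono hu hmem)⟩
        · intro hcon
          obtain ⟨e, heu, hew⟩ := Finset.exists_of_ssubset
            (HasSubset.Subset.ssubset_of_ne (Pf_mono hu) he)
          have h1 : e ∈ (((box A).subF).filter (fun B => isBox B = true)) \ Pf M A w :=
            Finset.mem_sdiff.mpr ⟨Pf_subset heu, hew⟩
          have h2 := hcon h1
          rw [Finset.mem_sdiff] at h2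
          exact h2.2 heu
      have hlt := Finset.card_lt_card hss
      obtain ⟨p, x, h1, h2, h3⟩ := ih u hdu (by omega)
      refine ⟨p, x, h1, ?_, h3⟩
      rcases h2 with rfl | h2
      · exact Or.inr hu
      · exact Or.inr (M.tr hu h2)

/-- The key stretching lemma: a world of depth > cx A forcing □A yields,
for every m, a model with a world of depth ≥ m forcing □A. -/
lemma stretch {M : KM} {A : MF} {w : M.W} (hbA : M.forces (box A) w)
    (hd : M.forces (dian (cx A + 1) top) w) (m : ℕ) :
    ∃ (M' : KM) (w' : M'.W), M'.forces (box A) w' ∧ M'.forces (dian m top) w' := by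
  classical
  have hwP : box A ∈ Pf M A w := by
    rw [Pf, Finset.mem_filter]
    exact ⟨Finset.mem_filter.mpr ⟨mem_subF_self _, by simp [MF.isBox]⟩, hbA⟩
  have hcard : ((((box A).subF).filter (fun B => isBox B = true)) \ Pf M A w).card < cx A + 1 := by
    have h1 : ((((box A).subF).filter (fun B => isBox B = true)) \ Pf M A w).card <
        (((box A).subF).filter (fun B => isBox B = true)).card := by
      apply Finset.card_lt_card
      constructor
      · exact Finset.sdiff_subset
      · intro hcon
        have := hcon (Pf_subset hwP)
        rw [Finset.mem_sdiff] at this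
        exact this.2 hwP
    rw [card_boxes_boxA] at h1
    exact h1
  obtain ⟨p, x0, hpx, hwp, hPf⟩ := pigeon (cx A + 1) w hd hcard
  have hwx0 : M.R w x0 := by
    rcases hwp with rfl | hwp
    · exact hpx
    · exact M.tr hwp hpx
  have hclone : ∀ D, box D ∈ (box A).subF → M.forces (box D) x0 → M.forces D x0 := by
    intro D hD hf
    have hmem : box D ∈ Pf M A x0 := by
      rw [Pf, Finset.mem_filter]
      exact ⟨Finset.mem_filter.mpr ⟨hD, by simp [MF.isBox]⟩, hf⟩
    rw [← hPf] at hmem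
    have hp : M.forces (box D) p := by
      rw [Pf, Finset.mem_filter] at hmem
      exact hmem.2
    exact hp x0 hpx
  refine ⟨cM M x0 (m+1), .inl w, ?_, ?_⟩
  · exact ((clone_truth A hclone (box A) (mem_subF_self _)).1 w).2 hbA
  · cases m with
    | zero => exact forces_dian_zero _ _
    | succ k =>
      refine forces_dian_succ.2 ⟨.inr (⟨0, by omega⟩ : Fin (k + 2)), hwx0, ?_⟩
      exact clone_dian (M := M) (x0 := x0) (N := k + 2) k ⟨0, by omega⟩ (by show 0 + k < k + 2; omega)

/-! ## Minimal counterexample world -/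

lemma exists_min_cex {M : KM} {A : MF} {w : M.W} (h : ¬ M.forces A w) :
    ∃ x : M.W, ¬ M.forces A x ∧ M.forces (box A) x := by
  letI := M.fin
  letI : IsTrans M.W (fun a b => M.R b a) := ⟨fun a b c h1 h2 => M.tr h2 h1⟩
  letI : IsIrrefl M.W (fun a b => M.R b a) := ⟨fun a h => M.ir h⟩
  have wf : WellFounded (fun a b : M.W => M.R b a) :=
    Finite.wellFounded_of_trans_of_irrefl _
  obtain ⟨x, hx, hmin⟩ := wf.has_min {y | ¬ M.forces A y} ⟨w, h⟩
  refine ⟨x, hx, ?_⟩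
  intro u hu
  by_contra hc
  exact hmin u hc hu

/-! ## Gluing a root below two models -/

section Glue
variable (M1 M2 : KM) (x1 : M1.W) (x2 : M2.W)

def gR : (Unit ⊕ (M1.W ⊕ M2.W)) → (Unit ⊕ (M1.W ⊕ M2.W)) → Prop
  | .inl _, .inr (.inl y) => y = x1 ∨ M1.R x1 y
  | .inl _, .inr (.inr y) => y = x2 ∨ M2.R x2 y
  | .inr (.inl x), .inr (.inl y) => M1.R x y
  | .inr (.inr x), .inr (.inr y) => M2.R x y
  | _, _ => False

def gM : KM where
  W := Unit ⊕ (M1.W ⊕ M2.W)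
  R := gR M1 M2 x1 x2
  V := fun n w => match w with
    | .inl _ => False
    | .inr (.inl x) => M1.V n x
    | .inr (.inr x) => M2.V n x
  fin := by
    letI := M1.fin
    letI := M2.fin
    infer_instance
  tr := by
    rintro (u | x | x) (v | y | y) (t | z | z) h1 h2 <;>
      first
      | exact h1.elim
      | exact h2.elim
      | skip
    · rcases h1 with rfl | h1
      · exact Or.inr h2
      · exact Or.inr (M1.tr h1 h2)
    · rcases h1 with rfl | h1
      · exact Or.inr h2
      · exact Or.inr (M2.tr h1 h2)
    · exact M1.tr h1 h2
    · exact M2.tr h1 h2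
  ir := by
    rintro (u | x | x) h
    · exact h.elim
    · exact M1.ir h
    · exact M2.ir h

variable {M1 M2 x1 x2}

lemma g_truth1 : ∀ (C : MF) (x : M1.W),
    (gM M1 M2 x1 x2).forces C (.inr (.inl x)) ↔ M1.forces C x := by
  intro C
  induction C with
  | var n => intro x; exact Iff.rfl
  | fal => intro x; exact Iff.rfl
  | imp B D ihB ihD =>
    intro x
    show (_ → _) ↔ (_ → _)
    rw [ihB x, ihD x]
  | box D ihD =>
    intro x
    constructor
    · intro hf u hu
      exact (ihD u).1 (hf (.inr (.inl u)) hu)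
    · intro hf w hw
      match w with
      | .inr (.inl u) => exact (ihD u).2 (hf u hw)
      | .inl u => exact hw.elim
      | .inr (.inr u) => exact hw.elim

lemma g_truth2 : ∀ (C : MF) (x : M2.W),
    (gM M1 M2 x1 x2).forces C (.inr (.inr x)) ↔ M2.forces C x := by
  intro C
  induction C with
  | var n => intro x; exact Iff.rfl
  | fal => intro x; exact Iff.rfl
  | imp B D ihB ihD =>
    intro x
    show (_ → _) ↔ (_ → _)
    rw [ihB x, ihD x]
  | box D ihD =>
    intro x
    constructor
    · intro hf u hu
      exact (ihD u).1 (hf (.inr (.inr u)) hu)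
    · intro hf w hw
      match w with
      | .inr (.inr u) => exact (ihD u).2 (hf u hw)
      | .inl u => exact hw.elim
      | .inr (.inl u) => exact hw.elim

end Glue

/-! ## The modal master lemma -/

theorem modal_master {A : MF} {m : ℕ}
    (hm : GLPrv (imp (dian m top) (imp (box (box A)) (box A))))
    (hA : ¬ GLPrv A)
    (hdA : ¬ GLPrv (imp (dian (cx A + 1) top) (neg (box A)))) : False := by
  classical
  -- countermodel for A, minimized
  obtain ⟨t1, ht1⟩ := gl_completeness hA
  obtain ⟨x1, hx1, hbx1⟩ := exists_min_cex ht1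
  -- countermodel for ◇^{c+1}⊤ → ¬□A
  obtain ⟨t2, ht2⟩ := gl_completeness hdA
  have h12 : (Mc (imp (dian (cx A + 1) top) (neg (box A)))).forces (dian (cx A + 1) top) t2 ∧
      (Mc (imp (dian (cx A + 1) top) (neg (box A)))).forces (box A) t2 := by
    by_contra hc
    apply ht2
    intro hX hY
    exact absurd ⟨hX, hY⟩ hc
  -- stretch it to depth ≥ m
  obtain ⟨M2, w2, hw2box, hw2d⟩ := stretch h12.2 h12.1 m
  -- glue
  set MG := gM (Mc A) M2 x1 w2 with hMG
  set root : MG.W := .inl () with hroot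
  have hrd : MG.forces (dian m top) root := by
    cases m with
    | zero => exact forces_dian_zero _ _
    | succ k =>
      refine forces_dian_succ.2 ⟨.inr (.inr w2), Or.inl rfl, ?_⟩
      exact (g_truth2 _ _).2 (forces_dian_mono M2 k w2 hw2d)
  have hrbb : MG.forces (box (box A)) root := by
    intro u hu
    match u with
    | .inl _ => exact hu.elim
    | .inr (.inl y) =>
      refine (g_truth1 (box A) y).2 ?_
      rcases hu with rfl | hu
      · exact hbx1
      · exact forces_box_persist hu hbx1
    | .inr (.inr y) =>
      refine (g_truth2 (box A) y).2 ?_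
      rcases hu with rfl | hu
      · exact hw2box
      · exact forces_box_persist hu hw2box
  have hrnb : ¬ MG.forces (box A) root := by
    intro hf
    exact hx1 ((g_truth1 A x1).1 (hf (.inr (.inl x1)) (Or.inl rfl)))
  exact hrnb (glSound hm MG root hrd hrbb)

end NTAux
namespace NTAux

/-! ## Arithmetic toolkit -/

section Arith
variable {S : PASetup}

def SResp (S : PASetup) (v : S.Sent → Bool) : Prop :=
  (∀ B C, v (S.imp B C) = (!(v B) || v C)) ∧ v S.fal = false

lemma sresp_neg {v : S.Sent → Bool} (hv : SResp S v) (X : S.Sent) :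
    v (S.neg X) = !(v X) := by
  show v (S.imp X S.fal) = _
  rw [hv.1, hv.2]
  cases v X <;> rfl

lemma paTaut (hS : S.Facts) {X : S.Sent}
    (h : ∀ v : S.Sent → Bool, SResp S v → v X = true) : S.PAPrv X :=
  hS.pa_taut X (fun v h1 h2 => h v ⟨h1, h2⟩)

lemma paTC1 (hS : S.Facts) {X Y : S.Sent}
    (hsem : ∀ v : S.Sent → Bool, SResp S v → v X = true → v Y = true)
    (hX : S.PAPrv X) : S.PAPrv Y := by
  refine hS.pa_mp _ _ (paTaut hS ?_) hX
  intro v hv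
  rw [hv.1]
  cases hx : v X with
  | false => simp
  | true => simp [hsem v hv hx]

lemma paTC2 (hS : S.Facts) {X1 X2 Y : S.Sent}
    (hsem : ∀ v : S.Sent → Bool, SResp S v → v X1 = true → v X2 = true → v Y = true)
    (h1 : S.PAPrv X1) (h2 : S.PAPrv X2) : S.PAPrv Y := by
  refine hS.pa_mp _ _ (paTC1 hS (Y := S.imp X2 Y) ?_ h1) h2
  intro v hv hx1
  rw [hv.1]
  cases hx2 : v X2 with
  | false => simp
  | true => simp [hsem v hv hx1 hx2]

lemma paTC3 (hS : S.Facts) {X1 X2 X3 Y : S.Sent}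
    (hsem : ∀ v : S.Sent → Bool, SResp S v → v X1 = true → v X2 = true → v X3 = true →
      v Y = true)
    (h1 : S.PAPrv X1) (h2 : S.PAPrv X2) (h3 : S.PAPrv X3) : S.PAPrv Y := by
  refine hS.pa_mp _ _ (paTC2 hS (Y := S.imp X3 Y) ?_ h1 h2) h3
  intro v hv hx1 hx2
  rw [hv.1]
  cases hx3 : v X3 with
  | false => simp
  | true => simp [hsem v hv hx1 hx2 hx3]

/-- `PA ⊢ Con^n → f(◇ⁿ⊤)`. -/
lemma con_imp_D (hS : S.Facts) (g : ℕ → S.Sent) :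
    ∀ n, S.PAPrv (S.imp (S.conIter n) (S.minterp g (MF.dian n MF.top))) := by
  intro n
  induction n with
  | zero =>
    apply paTaut hS
    intro v hv
    show v (S.imp (S.conIter 0) (S.minterp g (MF.neg (MF.boxn 0 (MF.neg MF.top))))) = true
    show v (S.imp (S.conIter 0) (S.neg (S.minterp g (MF.boxn 0 (MF.neg MF.top))))) = true
    rw [hv.1, sresp_neg hv]
    show (!(v (S.conIter 0)) || !(v (S.neg (S.minterp g MF.top)))) = true
    rw [sresp_neg hv]
    show (!(v (S.conIter 0)) || !(!(v (S.imp (S.minterp g MF.fal) (S.minterp g MF.fal))))) = true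
    show (!(v (S.conIter 0)) || !(!(v (S.imp S.fal S.fal)))) = true
    rw [hv.1, hv.2]
    cases v (S.conIter 0) <;> rfl
  | succ n ih =>
    -- ih : PA ⊢ Con^n → neg (minterp g (boxn n (neg top)))
    have hcontra : S.PAPrv (S.imp (S.minterp g (MF.boxn n (MF.neg MF.top)))
        (S.neg (S.conIter n))) := by
      refine paTC1 hS ?_ ih
      intro v hv h1
      rw [hv.1] at h1
      rw [hv.1, sresp_neg hv]
      have : S.minterp g (MF.dian n MF.top) = S.neg (S.minterp g (MF.boxn n (MF.neg MF.top))) := rfl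
      rw [this, sresp_neg hv] at h1
      cases hc : v (S.conIter n) <;> cases hm : v (S.minterp g (MF.boxn n (MF.neg MF.top))) <;>
        simp_all
    have hT : S.TPrv (S.imp (S.minterp g (MF.boxn n (MF.neg MF.top))) (S.neg (S.conIter n))) :=
      hS.pa_t _ hcontra
    have hpr1 : S.PAPrv (S.pr (S.imp (S.minterp g (MF.boxn n (MF.neg MF.top)))
        (S.neg (S.conIter n)))) := hS.d1 _ hT
    have hpr2 : S.PAPrv (S.imp (S.pr (S.minterp g (MF.boxn n (MF.neg MF.top))))
        (S.pr (S.neg (S.conIter n)))) :=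
      hS.pa_mp _ _ (hS.d2 _ _) hpr1
    -- goal: PA ⊢ Con^{n+1} → minterp g (dian (n+1) top)
    refine paTC1 hS ?_ hpr2
    intro v hv h1
    rw [hv.1] at h1
    show v (S.imp (S.conIter (n+1))
      (S.neg (S.pr (S.minterp g (MF.boxn n (MF.neg MF.top)))))) = true
    rw [hv.1, sresp_neg hv]
    show (!(v (S.neg (S.pr (S.neg (S.conIter n))))) ||
      !(v (S.pr (S.minterp g (MF.boxn n (MF.neg MF.top)))))) = true
    rw [sresp_neg hv]
    cases hp : v (S.pr (S.minterp g (MF.boxn n (MF.neg MF.top)))) <;>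
      cases hq : v (S.pr (S.neg (S.conIter n))) <;> simp_all

/-- `ℕ ⊨ Con^{c+1}` from `T ⊬ ¬Con^c`. -/
lemma trueN_conSucc (hS : S.Facts) (c : ℕ) (hh : ¬ S.TPrv (S.neg (S.conIter c))) :
    S.TrueN (S.conIter (c+1)) := by
  show S.TrueN (S.imp (S.pr (S.neg (S.conIter c))) S.fal)
  rw [hS.true_imp]
  intro hp
  exact absurd ((hS.true_pr _).1 hp) hh

end Arith

end NTAux
/-- assuming arithmetical soundness of GL: if the height of `T`
exceeds `cx A` (i.e. `T ⊬ ¬Con_T^k` for all `k ≤ cx A`) and for every Σ₁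
sentence `σ` there is an arithmetical interpretation `f` with
`PA ⊢ σ → f_T(□A)` and `PA + Con_T^{cx A + 1} ⊢ f_T(□A) → σ`, then `A` is
nontrifling, i.e. `GL_ω ⊬ □□A → □A`. -/
theorem nontrifling_of_fgh (S : PASetup) (hS : S.Facts)
    (glsound : ∀ (B : MF) (g : ℕ → S.Sent), GLPrv B → S.PAPrv (S.minterp g B))
    (A : MF)
    (height : ∀ k, k ≤ MF.cx A → ¬ S.TPrv (S.neg (S.conIter k)))
    (h : ∀ σ, S.Sigma1 σ → ∃ g : ℕ → S.Sent,
      S.PAPrv (S.imp σ (S.minterp g (MF.box A))) ∧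
      S.PAPrv (S.imp (S.conIter (MF.cx A + 1))
        (S.imp (S.minterp g (MF.box A)) σ))) :
    ¬ GLomegaPrv (MF.imp (MF.box (MF.box A)) (MF.box A)) := by
  intro hGL
  obtain ⟨m, hm⟩ := NTAux.glomega_bound hGL
  have hNtrue : S.TrueN (S.conIter (MF.cx A + 1)) :=
    NTAux.trueN_conSucc hS (MF.cx A) (height _ le_rfl)
  by_cases h1 : GLPrv A
  · -- If GL ⊢ A, flexibility with σ := Pr ⊥ contradicts consistency of T.
    obtain ⟨g, _, hb⟩ := h (S.pr S.fal) (hS.sigma1_pr _)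
    have hfA : S.PAPrv (S.minterp g A) := glsound A g h1
    have h2 : S.PAPrv (S.pr (S.minterp g A)) := hS.d1 _ (hS.pa_t _ hfA)
    have e1 : S.minterp g (MF.box A) = S.pr (S.minterp g A) := rfl
    have h3 : S.PAPrv (S.imp (S.conIter (MF.cx A + 1)) (S.pr S.fal)) := by
      refine NTAux.paTC2 hS ?_ hb h2
      intro v hv hx1 hx2
      rw [e1, hv.1, hv.1] at hx1
      rw [hv.1]
      rw [hx2] at hx1
      cases hc : v (S.conIter (MF.cx A + 1)) <;>
        cases hp : v (S.pr S.fal) <;> simp_all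
    have h4 := hS.pa_sound _ h3
    have h5 := (hS.true_imp _ _).1 h4 hNtrue
    exact hS.t_con ((hS.true_pr _).1 h5)
  by_cases h2 : GLPrv (MF.imp (MF.dian (MF.cx A + 1) MF.top) (MF.neg (MF.box A)))
  · -- If GL ⊢ ◇^{c+1}⊤ → ¬□A, flexibility with σ := ⊤ contradicts the height of T.
    obtain ⟨g, ha, _⟩ := h (S.neg S.fal) hS.sigma1_top
    have htop : S.PAPrv (S.neg S.fal) :=
      NTAux.paTaut hS (fun v hv => by rw [NTAux.sresp_neg hv, hv.2]; rfl)
    have hfA : S.PAPrv (S.minterp g (MF.box A)) := hS.pa_mp _ _ ha htop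
    have hg := glsound _ g h2
    have hD := NTAux.con_imp_D hS g (MF.cx A + 1)
    have e2 : S.minterp g (MF.imp (MF.dian (MF.cx A + 1) MF.top) (MF.neg (MF.box A))) =
        S.imp (S.minterp g (MF.dian (MF.cx A + 1) MF.top))
          (S.imp (S.minterp g (MF.box A)) S.fal) := rfl
    rw [e2] at hg
    have h3 : S.PAPrv (S.neg (S.conIter (MF.cx A + 1))) := by
      refine NTAux.paTC3 hS ?_ hg hD hfA
      intro v hv hx1 hx2 hx3
      rw [hv.1, hv.1] at hx1
      rw [hv.1] at hx2
      rw [NTAux.sresp_neg hv]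
      rw [hx3] at hx1
      cases hc : v (S.conIter (MF.cx A + 1)) <;>
        cases hd : v (S.minterp g (MF.dian (MF.cx A + 1) MF.top)) <;> simp_all [hv.2]
    have h4 := hS.pa_sound _ h3
    exact hS.true_fal ((hS.true_imp _ _).1 h4 hNtrue)
  · exact NTAux.modal_master hm h1 h2
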